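/- Let n ≥ 2, let σ, π ∈ S_n be distinct permutations with σπ⁻¹ a cycle, and let w be a real n×n matrix such that the minimum of Σ_{i=1}^n w_{i,τ(i)} over all τ ∈ S_n is attained exactly at τ = σ and τ = π and at no other permutation. Then there exists an n×n matrix A over K with det(A) = 0, all entries nonzero, ord(A_{ij}) = w_{ij} for all i, j, and every leading coefficient lc(A_{ij}) a positive real number, if and only if sgn(σ) ≠ sgn(π). -/

import Mathlib

open Finset

private lemma hs_sum_coeff {ι : Type*} (s : Finset ι) (f : ι → HahnSeries ℝ ℂ) (a : ℝ) :
    (∑ j ∈ s, f j).coeff a = ∑ j ∈ s, (f j).coeff a := by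
  classical
  induction s using Finset.induction with
  | empty => simp
  | insert _ _ h ih => simp [Finset.sum_insert h, ih]

private lemma hs_lc_mul {x y : HahnSeries ℝ ℂ} (hx : x ≠ 0) (hy : y ≠ 0) :
    (x * y).leadingCoeff = x.leadingCoeff * y.leadingCoeff := by
  rw [HahnSeries.leadingCoeff_eq, HahnSeries.order_mul hx hy,
    HahnSeries.coeff_mul_order_add_order]

private lemma hs_prod {ι : Type*} (s : Finset ι) (f : ι → HahnSeries ℝ ℂ)
    (hf : ∀ i ∈ s, f i ≠ 0) :
    (∏ i ∈ s, f i) ≠ 0 ∧ (∏ i ∈ s, f i).order = ∑ i ∈ s, (f i).order ∧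
      (∏ i ∈ s, f i).leadingCoeff = ∏ i ∈ s, (f i).leadingCoeff := by
  classical
  induction s using Finset.induction with
  | empty =>
      refine ⟨one_ne_zero, ?_, ?_⟩ <;>
        simp [HahnSeries.order_one, HahnSeries.leadingCoeff_one]
  | @insert a s ha ih =>
      have hfa : f a ≠ 0 := hf a (Finset.mem_insert_self a s)
      obtain ⟨h1, h2, h3⟩ := ih (fun i hi => hf i (Finset.mem_insert_of_mem hi))
      rw [Finset.prod_insert ha, Finset.prod_insert ha, Finset.sum_insert ha]
      exact ⟨mul_ne_zero hfa h1, by rw [HahnSeries.order_mul hfa h1, h2],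
        by rw [hs_lc_mul hfa h1, h3]⟩

/-- If one term of a finite sum of Hahn series is nonzero and all other terms are
zero or of strictly larger order, the sum is nonzero with that order and
leading coefficient. -/
private lemma hs_sum_key {ι : Type*} (s : Finset ι) (f : ι → HahnSeries ℝ ℂ) (i0 : ι)
    (hi0 : i0 ∈ s) (h0 : f i0 ≠ 0)
    (h : ∀ j ∈ s, j ≠ i0 → f j = 0 ∨ (f i0).order < (f j).order) :
    (∑ j ∈ s, f j) ≠ 0 ∧ (∑ j ∈ s, f j).order = (f i0).order ∧
      (∑ j ∈ s, f j).leadingCoeff = (f i0).leadingCoeff := by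
  classical
  set o := (f i0).order with ho
  have hco : (∑ j ∈ s, f j).coeff o = (f i0).coeff o := by
    rw [hs_sum_coeff]
    refine Finset.sum_eq_single i0 (fun j hj hji => ?_) (fun h' => absurd hi0 h')
    rcases h j hj hji with h' | h'
    · simp [h']
    · exact HahnSeries.coeff_eq_zero_of_lt_order h'
  have hne : (f i0).coeff o ≠ 0 := by
    rw [ho]; exact HahnSeries.coeff_order_eq_zero.not.mpr h0
  have hsne : (∑ j ∈ s, f j) ≠ 0 :=
    HahnSeries.ne_zero_of_coeff_ne_zero (by rw [hco]; exact hne)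
  have hle : (∑ j ∈ s, f j).order ≤ o :=
    HahnSeries.order_le_of_coeff_ne_zero (by rw [hco]; exact hne)
  have hge : o ≤ (∑ j ∈ s, f j).order := by
    by_contra hlt
    push_neg at hlt
    have hz : (∑ j ∈ s, f j).coeff ((∑ j ∈ s, f j).order) = 0 := by
      rw [hs_sum_coeff]
      refine Finset.sum_eq_zero fun j hj => ?_
      by_cases hji : j = i0
      · subst hji; exact HahnSeries.coeff_eq_zero_of_lt_order hlt
      · rcases h j hj hji with h' | h'
        · simp [h']
        · exact HahnSeries.coeff_eq_zero_of_lt_order (hlt.trans h')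
    exact hsne (HahnSeries.coeff_order_eq_zero.mp hz)
  have hord : (∑ j ∈ s, f j).order = o := le_antisymm hle hge
  refine ⟨hsne, hord, ?_⟩
  rw [HahnSeries.leadingCoeff_eq, hord, hco, ho, ← HahnSeries.leadingCoeff_eq]

private lemma hs_lc_neg (x : HahnSeries ℝ ℂ) : (-x).leadingCoeff = -x.leadingCoeff := by
  rw [HahnSeries.leadingCoeff_eq, HahnSeries.leadingCoeff_eq, HahnSeries.order_neg,
    HahnSeries.coeff_neg]

private lemma hs_sign_mul (s : ℤˣ) (x : HahnSeries ℝ ℂ) (hx : x ≠ 0) :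
    (((s : ℤ) : HahnSeries ℝ ℂ) * x) ≠ 0 ∧
    (((s : ℤ) : HahnSeries ℝ ℂ) * x).order = x.order ∧
    (((s : ℤ) : HahnSeries ℝ ℂ) * x).leadingCoeff = ((s : ℤ) : ℂ) * x.leadingCoeff := by
  rcases Int.units_eq_one_or s with h | h <;> subst h
  · simp [hx]
  · have e : (((-1 : ℤˣ) : ℤ) : HahnSeries ℝ ℂ) = -1 := by norm_num
    have e2 : (((-1 : ℤˣ) : ℤ) : ℂ) = -1 := by norm_num
    rw [e, e2]
    have hc : (-1 : HahnSeries ℝ ℂ) ≠ 0 := by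
      simp
    have hco : (-1 : HahnSeries ℝ ℂ).order = 0 := by
      rw [HahnSeries.order_neg, HahnSeries.order_one]
    have hcl : (-1 : HahnSeries ℝ ℂ).leadingCoeff = -1 := by
      rw [show (-1 : HahnSeries ℝ ℂ) = -(1 : HahnSeries ℝ ℂ) from rfl, hs_lc_neg,
        HahnSeries.leadingCoeff_one]
    refine ⟨mul_ne_zero hc hx, ?_, ?_⟩
    · rw [HahnSeries.order_mul hc hx, hco, zero_add]
    · rw [hs_lc_mul hc hx, hcl]

/-- "Positive real" complex numbers. -/
private def PosC (z : ℂ) : Prop := z.im = 0 ∧ 0 < z.re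

private lemma posC_one : PosC 1 := ⟨by simp, by simp⟩

private lemma posC_mul {a b : ℂ} (ha : PosC a) (hb : PosC b) : PosC (a * b) :=
  ⟨by simp [Complex.mul_im, ha.1, hb.1],
   by simpa [Complex.mul_re, ha.1, hb.1] using mul_pos ha.2 hb.2⟩

private lemma posC_add {a b : ℂ} (ha : PosC a) (hb : PosC b) : PosC (a + b) :=
  ⟨by simp [ha.1, hb.1], by simpa using add_pos ha.2 hb.2⟩

private lemma posC_ne_zero {a : ℂ} (ha : PosC a) : a ≠ 0 := by
  intro h; rw [h] at ha; exact lt_irrefl 0 (by simpa using ha.2)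

private lemma posC_prod {ι : Type*} (s : Finset ι) (f : ι → ℂ)
    (h : ∀ i ∈ s, PosC (f i)) : PosC (∏ i ∈ s, f i) :=
  Finset.prod_induction f PosC (fun _ _ => posC_mul) posC_one h

/-- **Proposition (positivity of maximal cones of the determinantal hypersurface),
pointwise form.** Let `σ ≠ π` be permutations with `σπ⁻¹` a cycle, and let `w` be a
real `n × n` matrix such that the minimum of `Σᵢ w_{i,τ(i)}` over `τ ∈ S_n` is attained
exactly at `τ = σ` and `τ = π`. Then `w` admits a singular lift to `K = HahnSeries ℝ ℂ`
with nonzero entries, entrywise order `w` and positive real leading coefficients iff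
`sgn σ ≠ sgn π`. -/
theorem stmt_16 (n : ℕ) (hn : 2 ≤ n) (σ π : Equiv.Perm (Fin n)) (hne : σ ≠ π)
    (hc : (σ * π⁻¹).IsCycle) (w : Matrix (Fin n) (Fin n) ℝ)
    (hmin : ∀ τ : Equiv.Perm (Fin n), (∑ i, w i (σ i)) ≤ ∑ i, w i (τ i))
    (hπ : (∑ i, w i (π i)) = ∑ i, w i (σ i))
    (honly : ∀ τ : Equiv.Perm (Fin n),
      (∑ i, w i (τ i)) = (∑ i, w i (σ i)) → τ = σ ∨ τ = π) :
    (∃ A : Matrix (Fin n) (Fin n) (HahnSeries ℝ ℂ), A.det = 0 ∧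
      ∀ i j, A i j ≠ 0 ∧ (A i j).order = w i j ∧
        ((A i j).coeff ((A i j).order)).im = 0 ∧
        0 < ((A i j).coeff ((A i j).order)).re) ↔
    Equiv.Perm.sign σ ≠ Equiv.Perm.sign π := by
  classical
  set m : ℝ := ∑ i, w i (σ i) with hm
  have hstrict : ∀ τ : Equiv.Perm (Fin n), τ ≠ σ → τ ≠ π → m < ∑ i, w i (τ i) := by
    intro τ h1 h2
    refine (hmin τ).lt_of_ne fun he => ?_
    rcases honly τ he.symm with h | h
    · exact h1 h
    · exact h2 h
  -- reindexing lemma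
  have hreidx : ∀ τ : Equiv.Perm (Fin n), (∑ i, w (τ i) i) = ∑ i, w i (τ⁻¹ i) := by
    intro τ
    rw [← Equiv.sum_comp τ (fun i => w i (τ⁻¹ i))]
    simp
  constructor
  · -- forward: existence of singular lift implies different signs
    rintro ⟨A, hdet, hA⟩ hsgn
    have hAne : ∀ i j, A i j ≠ 0 := fun i j => (hA i j).1
    have hord : ∀ i j, (A i j).order = w i j := fun i j => (hA i j).2.1
    have hpos : ∀ i j, PosC ((A i j).leadingCoeff) := by
      intro i j
      rw [HahnSeries.leadingCoeff_eq]
      exact ⟨(hA i j).2.2.1, (hA i j).2.2.2⟩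
    set f : Equiv.Perm (Fin n) → HahnSeries ℝ ℂ :=
      fun τ => ((Equiv.Perm.sign τ : ℤ) : HahnSeries ℝ ℂ) * ∏ i, A (τ i) i with hf
    have hprod : ∀ τ : Equiv.Perm (Fin n),
        (∏ i, A (τ i) i) ≠ 0 ∧ (∏ i, A (τ i) i).order = ∑ i, w i (τ⁻¹ i) ∧
          (∏ i, A (τ i) i).leadingCoeff = ∏ i, (A (τ i) i).leadingCoeff := by
      intro τ
      obtain ⟨h1, h2, h3⟩ := hs_prod Finset.univ (fun i => A (τ i) i)
        (fun i _ => hAne (τ i) i)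
      refine ⟨h1, ?_, h3⟩
      rw [h2, ← hreidx τ]
      exact Finset.sum_congr rfl fun i _ => hord (τ i) i
    have hfτ : ∀ τ : Equiv.Perm (Fin n), f τ ≠ 0 ∧ (f τ).order = ∑ i, w i (τ⁻¹ i) ∧
        (f τ).leadingCoeff = ((Equiv.Perm.sign τ : ℤ) : ℂ) * ∏ i, (A (τ i) i).leadingCoeff := by
      intro τ
      obtain ⟨h1, h2, h3⟩ := hprod τ
      obtain ⟨g1, g2, g3⟩ := hs_sign_mul (Equiv.Perm.sign τ) _ h1
      exact ⟨g1, by rw [g2, h2], by rw [g3, h3]⟩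
    have hdet' : (0 : HahnSeries ℝ ℂ) = ∑ τ : Equiv.Perm (Fin n), f τ := by
      rw [← hdet, Matrix.det_apply']
    have hcoeff : (0 : ℂ) = ∑ τ : Equiv.Perm (Fin n), (f τ).coeff m := by
      have := congrArg (fun x => HahnSeries.coeff x m) hdet'
      simpa [hs_sum_coeff] using this
    have hsp : σ⁻¹ ≠ π⁻¹ := fun h => hne (by rw [← inv_inv σ, h, inv_inv])
    have hzero : ∀ τ : Equiv.Perm (Fin n), τ ≠ σ⁻¹ → τ ≠ π⁻¹ → (f τ).coeff m = 0 := by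
      intro τ h1 h2
      refine HahnSeries.coeff_eq_zero_of_lt_order ?_
      rw [(hfτ τ).2.1]
      exact hstrict τ⁻¹ (fun h => h1 (by rw [← h, inv_inv])) (fun h => h2 (by rw [← h, inv_inv]))
    have hsum2 : (0 : ℂ) = (f σ⁻¹).coeff m + (f π⁻¹).coeff m := by
      rw [hcoeff]
      rw [← Finset.sum_subset (Finset.subset_univ ({σ⁻¹, π⁻¹} : Finset (Equiv.Perm (Fin n))))]
      · rw [Finset.sum_pair hsp]
      · intro τ _ hτ
        simp only [Finset.mem_insert, Finset.mem_singleton, not_or] at hτ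
        exact hzero τ hτ.1 hτ.2
    have hcσ : (f σ⁻¹).coeff m = ((Equiv.Perm.sign σ : ℤ) : ℂ) *
        ∏ i, (A (σ⁻¹ i) i).leadingCoeff := by
      obtain ⟨h1, h2, h3⟩ := hfτ σ⁻¹
      have hordm : (f σ⁻¹).order = m := by rw [h2]; simp [hm]
      rw [← hordm, ← HahnSeries.leadingCoeff_eq, h3, Equiv.Perm.sign_inv]
    have hcπ : (f π⁻¹).coeff m = ((Equiv.Perm.sign π : ℤ) : ℂ) *
        ∏ i, (A (π⁻¹ i) i).leadingCoeff := by
      obtain ⟨h1, h2, h3⟩ := hfτ π⁻¹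
      have hordm : (f π⁻¹).order = m := by rw [h2]; simp [hπ, hm]
      rw [← hordm, ← HahnSeries.leadingCoeff_eq, h3, Equiv.Perm.sign_inv]
    have hP : PosC (∏ i, (A (σ⁻¹ i) i).leadingCoeff) :=
      posC_prod _ _ fun i _ => hpos (σ⁻¹ i) i
    have hQ : PosC (∏ i, (A (π⁻¹ i) i).leadingCoeff) :=
      posC_prod _ _ fun i _ => hpos (π⁻¹ i) i
    rw [hcσ, hcπ, hsgn, ← mul_add] at hsum2
    have : ((Equiv.Perm.sign π : ℤ) : ℂ) ≠ 0 := by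
      rcases Int.units_eq_one_or (Equiv.Perm.sign π) with h | h <;> rw [h] <;> norm_num
    exact posC_ne_zero (posC_add hP hQ) (by
      have := mul_eq_zero.mp hsum2.symm
      tauto)
  · -- backward: different signs implies existence of singular lift
    intro hsgn
    obtain ⟨i0, hi0⟩ : ∃ i0, σ i0 ≠ π i0 := by
      by_contra h
      push_neg at h
      exact hne (Equiv.ext h)
    set j0 := σ i0 with hj0
    -- B is the transposed monomial matrix: B p q has order w q p
    set B : Matrix (Fin n) (Fin n) (HahnSeries ℝ ℂ) :=
      fun p q => HahnSeries.single (w q p) 1 with hB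
    have hBne : ∀ p q, B p q ≠ 0 := fun p q =>
      HahnSeries.single_ne_zero one_ne_zero
    have hBord : ∀ p q, (B p q).order = w q p := fun p q =>
      HahnSeries.order_single one_ne_zero
    have hBlc : ∀ p q, (B p q).leadingCoeff = 1 := fun p q =>
      HahnSeries.leadingCoeff_of_single
    set r0 : Fin n → HahnSeries ℝ ℂ :=
      fun q => if q = i0 then 0 else HahnSeries.single (w q j0) 1 with hr0
    set M0 : Matrix (Fin n) (Fin n) (HahnSeries ℝ ℂ) := B.updateRow j0 r0 with hM0
    set C : Matrix (Fin n) (Fin n) (HahnSeries ℝ ℂ) :=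
      B.updateRow j0 (Pi.single i0 (1 : HahnSeries ℝ ℂ)) with hC
    set N : HahnSeries ℝ ℂ := M0.det with hN
    set D : HahnSeries ℝ ℂ := C.det with hD
    -- facts about N
    have hNg : ∀ τ : Equiv.Perm (Fin n), τ i0 = j0 →
        (∏ q, M0 (τ q) q) = 0 := by
      intro τ hτ
      refine Finset.prod_eq_zero (Finset.mem_univ i0) ?_
      rw [hτ]
      simp [hM0, Matrix.updateRow_self, hr0]
    have hNg' : ∀ τ : Equiv.Perm (Fin n), τ i0 ≠ j0 →
        (∏ q, M0 (τ q) q) ≠ 0 ∧ (∏ q, M0 (τ q) q).order = ∑ i, w i (τ i) ∧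
          (∏ q, M0 (τ q) q).leadingCoeff = 1 := by
      intro τ hτ
      have hentry : ∀ q, M0 (τ q) q = HahnSeries.single (w q (τ q)) 1 := by
        intro q
        by_cases hq : τ q = j0
        · have hqi : q ≠ i0 := fun h => hτ (by rw [← h]; exact hq)
          rw [hq]
          simp [hM0, Matrix.updateRow_self, hr0, hqi, hq]
        · rw [hM0, Matrix.updateRow_ne hq]
      have : (∏ q, M0 (τ q) q) = ∏ q, HahnSeries.single (w q (τ q)) (1 : ℂ) :=
        Finset.prod_congr rfl fun q _ => hentry q
      rw [this]
      obtain ⟨h1, h2, h3⟩ := hs_prod Finset.univ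
        (fun q => HahnSeries.single (w q (τ q)) (1 : ℂ))
        (fun q _ => HahnSeries.single_ne_zero one_ne_zero)
      refine ⟨h1, ?_, ?_⟩
      · rw [h2]
        exact Finset.sum_congr rfl fun q _ => HahnSeries.order_single one_ne_zero
      · rw [h3]
        exact Finset.prod_eq_one fun q _ => HahnSeries.leadingCoeff_of_single
    set gN : Equiv.Perm (Fin n) → HahnSeries ℝ ℂ :=
      fun τ => ((Equiv.Perm.sign τ : ℤ) : HahnSeries ℝ ℂ) * ∏ q, M0 (τ q) q with hgN
    have hπi0 : π i0 ≠ j0 := fun h => hi0 (by rw [hj0, h])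
    have hgNπ : gN π ≠ 0 ∧ (gN π).order = m ∧
        (gN π).leadingCoeff = ((Equiv.Perm.sign π : ℤ) : ℂ) := by
      obtain ⟨h1, h2, h3⟩ := hNg' π hπi0
      obtain ⟨g1, g2, g3⟩ := hs_sign_mul (Equiv.Perm.sign π) _ h1
      exact ⟨g1, by rw [g2, h2, hπ], by rw [g3, h3, mul_one]⟩
    have hNfacts : N ≠ 0 ∧ N.order = m ∧ N.leadingCoeff = ((Equiv.Perm.sign π : ℤ) : ℂ) := by
      have hexp : N = ∑ τ : Equiv.Perm (Fin n), gN τ := by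
        rw [hN, Matrix.det_apply']
      have hside : ∀ τ ∈ Finset.univ, τ ≠ π → gN τ = 0 ∨ (gN π).order < (gN τ).order := by
        intro τ _ hτπ
        by_cases hτ : τ i0 = j0
        · exact Or.inl (by rw [hgN]; simp [hNg τ hτ])
        · obtain ⟨h1, h2, h3⟩ := hNg' τ hτ
          obtain ⟨g1, g2, g3⟩ := hs_sign_mul (Equiv.Perm.sign τ) _ h1
          refine Or.inr ?_
          rw [g2, h2, hgNπ.2.1]
          exact hstrict τ (fun h => hτ (by rw [h, hj0])) hτπ
      obtain ⟨h1, h2, h3⟩ := hs_sum_key Finset.univ gN π (Finset.mem_univ π) hgNπ.1 hside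
      rw [hexp]
      exact ⟨h1, by rw [h2, hgNπ.2.1], by rw [h3, hgNπ.2.2]⟩
    -- facts about D
    have hDz : ∀ τ : Equiv.Perm (Fin n), τ i0 ≠ j0 → (∏ q, C (τ q) q) = 0 := by
      intro τ hτ
      refine Finset.prod_eq_zero (Finset.mem_univ (τ⁻¹ j0)) ?_
      have h1 : τ (τ⁻¹ j0) = j0 := τ.apply_symm_apply j0
      have h2 : τ⁻¹ j0 ≠ i0 := fun h => hτ (by rw [← h, h1])
      rw [h1]
      rw [hC, Matrix.updateRow_self, Pi.single_apply, if_neg h2]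
    have hDnz : ∀ τ : Equiv.Perm (Fin n), τ i0 = j0 →
        (∏ q, C (τ q) q) ≠ 0 ∧
          (∏ q, C (τ q) q).order = (∑ i, w i (τ i)) - w i0 j0 ∧
          (∏ q, C (τ q) q).leadingCoeff = 1 := by
      intro τ hτ
      have hsplit : (∏ q, C (τ q) q) = C (τ i0) i0 * ∏ q ∈ Finset.univ.erase i0, C (τ q) q :=
        (Finset.mul_prod_erase Finset.univ _ (Finset.mem_univ i0)).symm
      have hCi0 : C (τ i0) i0 = 1 := by
        rw [hτ]
        simp [hC, Matrix.updateRow_self, Pi.single_eq_same]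
      have hentry : ∀ q ∈ Finset.univ.erase i0, C (τ q) q =
          HahnSeries.single (w q (τ q)) 1 := by
        intro q hq
        have hqi : q ≠ i0 := Finset.ne_of_mem_erase hq
        have hq' : τ q ≠ j0 := fun h => hqi (τ.injective (by rw [h, ← hτ]))
        rw [hC, Matrix.updateRow_ne hq']
      obtain ⟨h1, h2, h3⟩ := hs_prod (Finset.univ.erase i0)
        (fun q => HahnSeries.single (w q (τ q)) (1 : ℂ))
        (fun q _ => HahnSeries.single_ne_zero one_ne_zero)
      have hPe : (∏ q ∈ Finset.univ.erase i0, C (τ q) q) =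
          ∏ q ∈ Finset.univ.erase i0, HahnSeries.single (w q (τ q)) (1 : ℂ) :=
        Finset.prod_congr rfl hentry
      have hsum : (∑ q ∈ Finset.univ.erase i0, w q (τ q)) = (∑ i, w i (τ i)) - w i0 j0 := by
        have := Finset.sum_erase_add Finset.univ (fun q => w q (τ q)) (Finset.mem_univ i0)
        rw [eq_sub_iff_add_eq, ← hτ]
        exact this
      rw [hsplit, hCi0, one_mul, hPe]
      refine ⟨h1, ?_, ?_⟩
      · rw [h2, ← hsum]
        exact Finset.sum_congr rfl fun q _ => HahnSeries.order_single one_ne_zero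
      · rw [h3]
        exact Finset.prod_eq_one fun q _ => HahnSeries.leadingCoeff_of_single
    set gD : Equiv.Perm (Fin n) → HahnSeries ℝ ℂ :=
      fun τ => ((Equiv.Perm.sign τ : ℤ) : HahnSeries ℝ ℂ) * ∏ q, C (τ q) q with hgD
    have hσi0 : σ i0 = j0 := rfl
    have hgDσ : gD σ ≠ 0 ∧ (gD σ).order = m - w i0 j0 ∧
        (gD σ).leadingCoeff = ((Equiv.Perm.sign σ : ℤ) : ℂ) := by
      obtain ⟨h1, h2, h3⟩ := hDnz σ hσi0
      obtain ⟨g1, g2, g3⟩ := hs_sign_mul (Equiv.Perm.sign σ) _ h1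
      exact ⟨g1, by rw [g2, h2, ← hm], by rw [g3, h3, mul_one]⟩
    have hDfacts : D ≠ 0 ∧ D.order = m - w i0 j0 ∧
        D.leadingCoeff = ((Equiv.Perm.sign σ : ℤ) : ℂ) := by
      have hexp : D = ∑ τ : Equiv.Perm (Fin n), gD τ := by
        rw [hD, Matrix.det_apply']
      have hside : ∀ τ ∈ Finset.univ, τ ≠ σ → gD τ = 0 ∨ (gD σ).order < (gD τ).order := by
        intro τ _ hτσ
        by_cases hτ : τ i0 = j0
        · obtain ⟨h1, h2, h3⟩ := hDnz τ hτ
          obtain ⟨g1, g2, g3⟩ := hs_sign_mul (Equiv.Perm.sign τ) _ h1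
          refine Or.inr ?_
          rw [g2, h2, hgDσ.2.1]
          have hτπ : τ ≠ π := fun h => hπi0 (by rw [← h, hτ])
          exact sub_lt_sub_right (hstrict τ hτσ hτπ) _
        · exact Or.inl (by rw [hgD]; simp [hDz τ hτ])
      obtain ⟨h1, h2, h3⟩ := hs_sum_key Finset.univ gD σ (Finset.mem_univ σ) hgDσ.1 hside
      rw [hexp]
      exact ⟨h1, by rw [h2, hgDσ.2.1], by rw [h3, hgDσ.2.2]⟩
    obtain ⟨hNne, hNord, hNlc⟩ := hNfacts
    obtain ⟨hDne, hDord, hDlc⟩ := hDfacts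
    -- the special entry
    set x : HahnSeries ℝ ℂ := (-N) / D with hx
    have hxD : x * D = -N := div_mul_cancel₀ (-N) hDne
    have hxne : x ≠ 0 := div_ne_zero (neg_ne_zero.mpr hNne) hDne
    have hxord : x.order = w i0 j0 := by
      have h1 : (x * D).order = x.order + D.order := HahnSeries.order_mul hxne hDne
      rw [hxD, HahnSeries.order_neg, hNord, hDord] at h1
      linarith
    have hxlc : x.leadingCoeff = 1 := by
      have h1 : (x * D).leadingCoeff = x.leadingCoeff * D.leadingCoeff := hs_lc_mul hxne hDne
      rw [hxD, hs_lc_neg, hNlc, hDlc] at h1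
      rcases Int.units_eq_one_or (Equiv.Perm.sign σ) with h | h <;>
        rcases Int.units_eq_one_or (Equiv.Perm.sign π) with h' | h'
      · exact absurd (h.trans h'.symm) hsgn
      · rw [h, h'] at h1
        push_cast at h1
        linear_combination -h1
      · rw [h, h'] at h1
        push_cast at h1
        linear_combination h1
      · exact absurd (h.trans h'.symm) hsgn
    -- the matrix M
    set r : Fin n → HahnSeries ℝ ℂ :=
      fun q => if q = i0 then x else HahnSeries.single (w q j0) 1 with hr
    set M : Matrix (Fin n) (Fin n) (HahnSeries ℝ ℂ) := B.updateRow j0 r with hM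
    -- updateRow of updateRow collapses
    have upd2 : ∀ (r' v : Fin n → HahnSeries ℝ ℂ),
        (B.updateRow j0 r').updateRow j0 v = B.updateRow j0 v := by
      intro r' v
      funext p q
      by_cases hp : p = j0 <;> simp [Matrix.updateRow_apply, hp]
    set cof : Fin n → HahnSeries ℝ ℂ :=
      fun q => (B.updateRow j0 (Pi.single q (1 : HahnSeries ℝ ℂ))).det with hcof
    have hdetexp : ∀ (r' : Fin n → HahnSeries ℝ ℂ),
        (B.updateRow j0 r').det = ∑ q, r' q * cof q := by
      intro r'
      have h1 := congrFun (congrFun (Matrix.mul_adjugate (B.updateRow j0 r')) j0) j0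
      simp only [Matrix.mul_apply, Matrix.smul_apply, Matrix.one_apply_eq, smul_eq_mul,
        mul_one] at h1
      rw [← h1]
      refine Finset.sum_congr rfl fun q _ => ?_
      rw [Matrix.updateRow_self, Matrix.adjugate_apply, upd2]
    have hMdet : M.det = 0 := by
      have hMe : M.det = ∑ q, r q * cof q := hdetexp r
      have hM0e : N = ∑ q, r0 q * cof q := hdetexp r0
      have hsplitM : (∑ q, r q * cof q) =
          r i0 * cof i0 + ∑ q ∈ Finset.univ.erase i0, r q * cof q :=
        (Finset.add_sum_erase Finset.univ _ (Finset.mem_univ i0)).symm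
      have hsplitN : (∑ q, r0 q * cof q) =
          r0 i0 * cof i0 + ∑ q ∈ Finset.univ.erase i0, r0 q * cof q :=
        (Finset.add_sum_erase Finset.univ _ (Finset.mem_univ i0)).symm
      have htail : (∑ q ∈ Finset.univ.erase i0, r q * cof q) =
          ∑ q ∈ Finset.univ.erase i0, r0 q * cof q := by
        refine Finset.sum_congr rfl fun q hq => ?_
        have hqi : q ≠ i0 := Finset.ne_of_mem_erase hq
        rw [hr, hr0]
        simp [hqi]
      have hcofD : cof i0 = D := rfl
      have hri0 : r i0 = x := by rw [hr]; simp
      have hr0i0 : r0 i0 = 0 := by rw [hr0]; simp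
      have hNeq : (∑ q ∈ Finset.univ.erase i0, r0 q * cof q) = N := by
        rw [hM0e, hsplitN, hr0i0, zero_mul, zero_add]
      rw [hMe, hsplitM, htail, hri0, hcofD, hNeq, hxD]
      ring
    refine ⟨Matrix.transpose M, ?_, ?_⟩
    · rw [Matrix.det_transpose]
      exact hMdet
    · intro i j
      have hgood : ∀ y : HahnSeries ℝ ℂ, y ≠ 0 → y.order = w i j → y.leadingCoeff = 1 →
          y ≠ 0 ∧ y.order = w i j ∧ (y.coeff y.order).im = 0 ∧ 0 < (y.coeff y.order).re := by
        intro y h1 h2 h3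
        have hc : y.coeff y.order = 1 := by rw [← HahnSeries.leadingCoeff_eq, h3]
        exact ⟨h1, h2, by rw [hc]; simp, by rw [hc]; simp⟩
      have hentry : Matrix.transpose M i j = M j i := rfl
      rw [hentry]
      by_cases hj : j = j0
      · subst hj
        rw [hM, Matrix.updateRow_self]
        by_cases hi : i = i0
        · subst hi
          rw [hr]
          simp only [if_pos rfl]
          exact hgood x hxne hxord hxlc
        · rw [hr]
          simp only [if_neg hi]
          exact hgood _ (HahnSeries.single_ne_zero one_ne_zero)
            (HahnSeries.order_single one_ne_zero) HahnSeries.leadingCoeff_of_single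
      · rw [hM, Matrix.updateRow_apply, if_neg hj, hB]
        exact hgood _ (HahnSeries.single_ne_zero one_ne_zero)
          (HahnSeries.order_single one_ne_zero) HahnSeries.leadingCoeff_of_single
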